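/- (Theorem 1: regret bound of the online linear control algorithm without disturbances.) Let A be a (κ,γ)-strongly stable continuous linear map on a finite-dimensional real inner product space E, let X ⊆ E be nonempty, and let Π : E → E satisfy Π y ∈ X and ‖Π y − x‖ ≤ ‖y − x‖ for all y ∈ E and x ∈ X. Let L > 0, D > 0, T ≥ 1, set η = 2γ/(L·√(T·(1 + 4κ²))), and let (f_t)_{t=1}^T be convex differentiable real-valued functions on E. Suppose the sequences (x_t) and (z_t) satisfy: z_1 ∈ X, z_{t+1} = Π(z_t − η·∇f_t(x_t)), x_{t+1} = A x_t + (I − A) z_t for all 1 ≤ t ≤ T, with ‖x_t‖ ≤ D, ‖z_t‖ ≤ D, and ‖∇f_t(x_t)‖ ≤ L·D for all t. Then for every x* ∈ X with ‖x*‖ ≤ D, Σ_{t=1}^T (f_t(x_t) − f_t(x*)) ≤ (2·L·D²/γ)·(√(T·(1 + 4κ²)) + κ). -/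

import Mathlib

set_option maxHeartbeats 1000000

open Set RealInnerProductSpace

lemma sum_Icc_telescope (φ : ℕ → ℝ) (n : ℕ) :
    ∑ t ∈ Finset.Icc 1 n, (φ t - φ (t+1)) = φ 1 - φ (n+1) := by
  induction n with
  | zero => simp
  | succ n ih => rw [Finset.sum_Icc_succ_top (by omega), ih]; ring

lemma sum_geom_Icc_le {γ : ℝ} (hγ : 0 < γ) (hγ1 : γ ≤ 1) (n : ℕ) :
    ∑ t ∈ Finset.Icc 1 n, (1 - γ)^(t - 1) ≤ 1 / γ := by
  have h0 : (0:ℝ) ≤ 1 - γ := by linarith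
  have h : ∑ t ∈ Finset.Icc 1 n, (1 - γ)^(t - 1) = ∑ i ∈ Finset.range n, (1-γ)^i := by
    rw [← Finset.Ico_add_one_right_eq_Icc, Finset.sum_Ico_eq_sum_range]
    simp
  rw [h, geom_sum_eq (by intro h; rw [sub_eq_self] at h; exact hγ.ne' h) n,
    show (((1-γ):ℝ)^n - 1) / ((1-γ) - 1) = (1 - (1-γ)^n)/γ by
      rw [show ((1-γ):ℝ)-1 = -γ by ring, div_neg, ← neg_div]; ring_nf]
  gcongr
  nlinarith [pow_nonneg h0 n]

lemma grad_ineq {E : Type*} [NormedAddCommGroup E] [InnerProductSpace ℝ E]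
    [CompleteSpace E]
    {φ : E → ℝ} (hc : ConvexOn ℝ Set.univ φ) (hd : Differentiable ℝ φ) (a b : E) :
    φ a - φ b ≤ ⟪gradient φ a, a - b⟫ := by
  set c : ℝ → E := fun s => a + s • (b - a) with hc_def
  have h0 : c 0 = a := by simp [hc_def]
  have h1 : c 1 = b := by simp [hc_def]
  have hcurve : HasDerivAt c (b - a) 0 := by
    rw [hc_def]; simpa using ((hasDerivAt_id (0:ℝ)).smul_const (b - a)).const_add a
  have hgrad : HasFDerivAt φ ((InnerProductSpace.toDual ℝ E) (gradient φ a)) (c 0) := by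
    rw [h0, ← hasGradientAt_iff_hasFDerivAt]
    exact (hd a).hasGradientAt
  have hg : HasDerivAt (φ ∘ c) ⟪gradient φ a, b - a⟫ 0 := by
    simpa [InnerProductSpace.toDual_apply_apply] using hgrad.comp_hasDerivAt 0 hcurve
  have hconv : ConvexOn ℝ Set.univ (φ ∘ c) := by
    have h := hc.comp_affineMap (AffineMap.lineMap a b : ℝ →ᵃ[ℝ] E)
    have hcc : (φ ∘ c) = (φ ∘ (AffineMap.lineMap a b : ℝ →ᵃ[ℝ] E)) := by
      funext s
      show φ _ = φ _
      congr 1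
      rw [AffineMap.lineMap_apply_module]
      module
    rw [hcc]
    simpa using h
  have hslope := hconv.le_slope_of_hasDerivAt (mem_univ (0:ℝ)) (mem_univ (1:ℝ)) one_pos hg
  rw [slope_def_field] at hslope
  simp only [Function.comp, h0, h1] at hslope
  have hneg : ⟪gradient φ a, a - b⟫ = - ⟪gradient φ a, b - a⟫ := by
    rw [← inner_neg_right, neg_sub]
  rw [hneg]
  simp only [sub_zero, div_one] at hslope
  linarith



/-- A continuous linear map `A` is `(κ,γ)`-strongly stable if `A = H ∘ J ∘ H⁻¹` for some
invertible continuous linear map `H` and continuous linear map `J` with `‖J‖ ≤ 1 - γ` and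
`‖H‖·‖H⁻¹‖ ≤ κ`. -/
def StronglyStable {E : Type*} [NormedAddCommGroup E] [InnerProductSpace ℝ E]
    (κ γ : ℝ) (A : E →L[ℝ] E) : Prop :=
  ∃ (H : E ≃L[ℝ] E) (J : E →L[ℝ] E),
    A = (H : E →L[ℝ] E).comp (J.comp (H.symm : E →L[ℝ] E)) ∧
      ‖J‖ ≤ 1 - γ ∧ ‖(H : E →L[ℝ] E)‖ * ‖(H.symm : E →L[ℝ] E)‖ ≤ κ

/-- Theorem 1: regret bound of the online linear control algorithm without
disturbances, with step size `η = 2γ/(L√(T(1+4κ²)))`. -/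
theorem online_linear_control_regret {E : Type*}
    [NormedAddCommGroup E] [InnerProductSpace ℝ E] [FiniteDimensional ℝ E]
    {κ γ L D η : ℝ} (hκ : 0 < κ) (hγ : 0 < γ) (hγ1 : γ ≤ 1) (hL : 0 < L) (hD : 0 < D)
    {A : E →L[ℝ] E} (hA : StronglyStable κ γ A)
    (X : Set E) (hX : X.Nonempty) (proj : E → E)
    (hprojX : ∀ y : E, proj y ∈ X)
    (hproj : ∀ y : E, ∀ x ∈ X, ‖proj y - x‖ ≤ ‖y - x‖)
    (T : ℕ) (hT : 1 ≤ T)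
    (hη : η = 2 * γ / (L * Real.sqrt (T * (1 + 4 * κ ^ 2))))
    (f : ℕ → E → ℝ)
    (hconv : ∀ t ∈ Finset.Icc 1 T, ConvexOn ℝ Set.univ (f t))
    (hdiff : ∀ t ∈ Finset.Icc 1 T, Differentiable ℝ (f t))
    (x z : ℕ → E) (hz1 : z 1 ∈ X)
    (hzrec : ∀ t : ℕ, 1 ≤ t → t ≤ T → z (t + 1) = proj (z t - η • gradient (f t) (x t)))
    (hxrec : ∀ t : ℕ, 1 ≤ t → t ≤ T → x (t + 1) = A (x t) + ((1 : E →L[ℝ] E) - A) (z t))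
    (hxbd : ∀ t ∈ Finset.Icc 1 T, ‖x t‖ ≤ D)
    (hzbd : ∀ t ∈ Finset.Icc 1 T, ‖z t‖ ≤ D)
    (hgradbd : ∀ t ∈ Finset.Icc 1 T, ‖gradient (f t) (x t)‖ ≤ L * D) :
    ∀ xs ∈ X, ‖xs‖ ≤ D →
      ∑ t ∈ Finset.Icc 1 T, (f t (x t) - f t xs) ≤
        2 * L * D ^ 2 / γ * (Real.sqrt (T * (1 + 4 * κ ^ 2)) + κ) := by
  intro xs hxs hxsD
  haveI : CompleteSpace E := FiniteDimensional.complete ℝ E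
  set s : ℝ := Real.sqrt (T * (1 + 4 * κ ^ 2)) with hs_def
  have hT1 : (1:ℝ) ≤ (T:ℝ) := by exact_mod_cast hT
  have harg : (0:ℝ) < T * (1 + 4 * κ ^ 2) := by nlinarith
  have hs : 0 < s := Real.sqrt_pos.mpr harg
  have hsq : s ^ 2 = T * (1 + 4 * κ ^ 2) := Real.sq_sqrt harg.le
  have hη0 : 0 < η := by
    rw [hη]; positivity
  -- dispatch trivial case
  rcases subsingleton_or_nontrivial E with hE | hE
  · have hzero : ∀ t ∈ Finset.Icc 1 T, f t (x t) - f t xs = 0 := by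
      intro t _
      have : x t = xs := Subsingleton.elim _ _
      rw [this, sub_self]
    rw [Finset.sum_congr rfl hzero, Finset.sum_const_zero]
    have h1 : (0:ℝ) ≤ 2 * L * D ^ 2 / γ := by positivity
    have h2 : (0:ℝ) ≤ s + κ := by positivity
    positivity
  obtain ⟨H, J, hHJ, hJn, hHκ⟩ := hA
  set Hn := ‖(H : E →L[ℝ] E)‖ with hHn_def
  set Hsn := ‖(H.symm : E →L[ℝ] E)‖ with hHsn_def
  have hκ1 : (1:ℝ) ≤ κ := by
    obtain ⟨v, hv⟩ := exists_ne (0 : E)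
    have hv0 : 0 < ‖v‖ := norm_pos_iff.mpr hv
    have h1 : ‖v‖ ≤ Hn * Hsn * ‖v‖ := by
      calc ‖v‖ = ‖H (H.symm v)‖ := by rw [H.apply_symm_apply]
        _ ≤ Hn * ‖H.symm v‖ := (H : E →L[ℝ] E).le_opNorm _
        _ ≤ Hn * (Hsn * ‖v‖) := by
            have := (H.symm : E →L[ℝ] E).le_opNorm v
            exact mul_le_mul_of_nonneg_left this (norm_nonneg _)
        _ = Hn * Hsn * ‖v‖ := by ring
    have : (1:ℝ) ≤ Hn * Hsn := by
      by_contra hcon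
      push_neg at hcon
      nlinarith
    linarith
  -- z stays in X
  have hzX : ∀ t : ℕ, 1 ≤ t → t ≤ T + 1 → z t ∈ X := by
    intro t ht1 ht2
    rcases Nat.exists_eq_add_of_le ht1 with ⟨u, rfl⟩
    cases u with
    | zero => exact hz1
    | succ u =>
      rw [show 1 + (u+1) = (1+u) + 1 by ring, hzrec (1+u) (by omega) (by omega)]
      exact hprojX _
  set g : ℕ → E := fun t => gradient (f t) (x t) with hg_def
  -- step bound on z movement
  have hzmove : ∀ t : ℕ, 1 ≤ t → t ≤ T → ‖z (t+1) - z t‖ ≤ η * L * D := by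
    intro t ht1 ht2
    rw [hzrec t ht1 ht2]
    calc ‖proj (z t - η • g t) - z t‖ ≤ ‖(z t - η • g t) - z t‖ :=
          hproj _ _ (hzX t ht1 (by omega))
      _ = η * ‖g t‖ := by
          rw [sub_sub_cancel_left, norm_neg, norm_smul, Real.norm_eq_abs,
            abs_of_pos hη0]
      _ ≤ η * (L * D) := by
          have := hgradbd t (Finset.mem_Icc.mpr ⟨ht1, ht2⟩)
          exact mul_le_mul_of_nonneg_left this hη0.le
      _ = η * L * D := by ring
  -- movement bound via strong stability
  have key : ∀ t : ℕ, 1 ≤ t → t ≤ T →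
      ‖H.symm (x t - z t)‖ ≤ Hsn * (2*D) * (1-γ)^(t-1) + Hsn * (η*L*D) / γ := by
    intro t ht1
    induction t, ht1 using Nat.le_induction with
    | base =>
      intro hle
      have hx1 : ‖x 1‖ ≤ D := hxbd 1 (Finset.mem_Icc.mpr ⟨le_refl _, hT⟩)
      have hz1' : ‖z 1‖ ≤ D := hzbd 1 (Finset.mem_Icc.mpr ⟨le_refl _, hT⟩)
      have h1 : ‖x 1 - z 1‖ ≤ 2 * D := by
        calc ‖x 1 - z 1‖ ≤ ‖x 1‖ + ‖z 1‖ := norm_sub_le _ _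
          _ ≤ 2 * D := by linarith
      have h2 : ‖H.symm (x 1 - z 1)‖ ≤ Hsn * (2*D) := by
        calc ‖H.symm (x 1 - z 1)‖ ≤ Hsn * ‖x 1 - z 1‖ := (H.symm : E →L[ℝ] E).le_opNorm _
          _ ≤ Hsn * (2*D) := mul_le_mul_of_nonneg_left h1 (norm_nonneg _)
      have h3 : 0 ≤ Hsn * (η*L*D) / γ := by positivity
      rw [show (1:ℕ)-1=0 from rfl, pow_zero, mul_one]
      linarith
    | succ t ht1 ih =>
      intro hle
      have htT : t ≤ T := by omega
      have ihh := ih htT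
      -- recursion for the transformed error
      have hw : H.symm (x (t+1) - z (t+1)) =
          J (H.symm (x t - z t)) + H.symm (z t - z (t+1)) := by
        have hx' : x (t+1) - z (t+1) = A (x t - z t) + (z t - z (t+1)) := by
          rw [hxrec t ht1 htT]
          simp only [ContinuousLinearMap.sub_apply, ContinuousLinearMap.one_apply, map_sub]
          abel
        rw [hx', map_add]
        congr 1
        rw [hHJ]
        simp only [ContinuousLinearMap.coe_comp', Function.comp_apply,
          ContinuousLinearEquiv.coe_coe, ContinuousLinearEquiv.symm_apply_apply]
      have hJb : ‖J (H.symm (x t - z t))‖ ≤ (1-γ) * ‖H.symm (x t - z t)‖ := by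
        calc ‖J (H.symm (x t - z t))‖ ≤ ‖J‖ * ‖H.symm (x t - z t)‖ := J.le_opNorm _
          _ ≤ (1-γ) * ‖H.symm (x t - z t)‖ :=
            mul_le_mul_of_nonneg_right hJn (norm_nonneg _)
      have hdb : ‖H.symm (z t - z (t+1))‖ ≤ Hsn * (η*L*D) := by
        calc ‖H.symm (z t - z (t+1))‖ ≤ Hsn * ‖z t - z (t+1)‖ :=
              (H.symm : E →L[ℝ] E).le_opNorm _
          _ ≤ Hsn * (η*L*D) := by
              rw [norm_sub_rev]
              have := hzmove t ht1 htT
              nlinarith [norm_nonneg ((H.symm : E →L[ℝ] E))]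
      have hnorm : ‖H.symm (x (t+1) - z (t+1))‖ ≤
          (1-γ) * ‖H.symm (x t - z t)‖ + Hsn * (η*L*D) := by
        rw [hw]
        calc ‖J (H.symm (x t - z t)) + H.symm (z t - z (t+1))‖
            ≤ ‖J (H.symm (x t - z t))‖ + ‖H.symm (z t - z (t+1))‖ := norm_add_le _ _
          _ ≤ (1-γ) * ‖H.symm (x t - z t)‖ + Hsn * (η*L*D) := add_le_add hJb hdb
      have hγ0' : (0:ℝ) ≤ 1 - γ := by linarith
      have hpow : (1-γ) * (1-γ)^(t-1) = (1-γ)^(t+1-1) := by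
        rw [show t+1-1 = (t-1)+1 by omega, pow_succ]
        ring
      have hC2 : (0:ℝ) ≤ Hsn * (η*L*D) / γ := by positivity
      have hgeq : Hsn * (η*L*D) = γ * (Hsn * (η*L*D) / γ) := by
        field_simp
      calc ‖H.symm (x (t+1) - z (t+1))‖
          ≤ (1-γ) * ‖H.symm (x t - z t)‖ + Hsn * (η*L*D) := hnorm
        _ ≤ (1-γ) * (Hsn * (2*D) * (1-γ)^(t-1) + Hsn * (η*L*D) / γ) + Hsn * (η*L*D) :=
            by nlinarith
        _ = Hsn * (2*D) * ((1-γ) * (1-γ)^(t-1)) + ((1-γ) * (Hsn * (η*L*D)/γ) + Hsn * (η*L*D)) :=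
            by ring
        _ ≤ Hsn * (2*D) * (1-γ)^(t+1-1) + Hsn * (η*L*D) / γ := by
            rw [hpow]
            have : (1-γ) * (Hsn * (η*L*D)/γ) + Hsn * (η*L*D) = Hsn * (η*L*D)/γ := by
              rw [hgeq]; ring_nf; field_simp; ring
            linarith
  have move : ∀ t : ℕ, 1 ≤ t → t ≤ T →
      ‖x t - z t‖ ≤ κ * (2*D) * (1-γ)^(t-1) + κ * (η*L*D) / γ := by
    intro t ht1 ht2
    have h1 : ‖x t - z t‖ ≤ Hn * ‖H.symm (x t - z t)‖ := by
      calc ‖x t - z t‖ = ‖H (H.symm (x t - z t))‖ := by rw [H.apply_symm_apply]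
        _ ≤ Hn * ‖H.symm (x t - z t)‖ := (H : E →L[ℝ] E).le_opNorm _
    have h2 := key t ht1 ht2
    have hHn0 : 0 ≤ Hn := norm_nonneg _
    have hpow0 : (0:ℝ) ≤ (1-γ)^(t-1) := by
      apply pow_nonneg; linarith
    have h3 : Hn * (Hsn * (2*D) * (1-γ)^(t-1) + Hsn * (η*L*D) / γ)
        = (Hn * Hsn) * (2*D) * (1-γ)^(t-1) + (Hn * Hsn) * (η*L*D) / γ := by ring
    have h4 : (Hn * Hsn) * (2*D) * (1-γ)^(t-1) ≤ κ * (2*D) * (1-γ)^(t-1) := by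
      have : (Hn * Hsn) * (2*D) ≤ κ * (2*D) := by nlinarith
      exact mul_le_mul_of_nonneg_right this hpow0
    have h5 : (Hn * Hsn) * (η*L*D) / γ ≤ κ * (η*L*D) / γ := by
      refine (div_le_div_iff_of_pos_right hγ).mpr ?_
      nlinarith [mul_nonneg (sub_nonneg.mpr hHκ) (by positivity : (0:ℝ) ≤ η*L*D)]
    calc ‖x t - z t‖ ≤ Hn * ‖H.symm (x t - z t)‖ := h1
      _ ≤ Hn * (Hsn * (2*D) * (1-γ)^(t-1) + Hsn * (η*L*D) / γ) :=
          mul_le_mul_of_nonneg_left h2 hHn0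
      _ = (Hn * Hsn) * (2*D) * (1-γ)^(t-1) + (Hn * Hsn) * (η*L*D) / γ := h3
      _ ≤ κ * (2*D) * (1-γ)^(t-1) + κ * (η*L*D) / γ := by linarith
  -- OGD inequality per round
  have ogd : ∀ t ∈ Finset.Icc 1 T, ⟪g t, z t - xs⟫ ≤
      (‖z t - xs‖^2 - ‖z (t+1) - xs‖^2)/(2*η) + η/2 * ‖g t‖^2 := by
    intro t ht
    obtain ⟨ht1, ht2⟩ := Finset.mem_Icc.mp ht
    have h1 : ‖z (t+1) - xs‖ ≤ ‖(z t - xs) - η • g t‖ := by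
      rw [hzrec t ht1 ht2, show (z t - xs) - η • g t = (z t - η • g t) - xs by abel]
      exact hproj _ xs hxs
    have h2 : ‖(z t - xs) - η • g t‖^2
        = ‖z t - xs‖^2 - 2*η*⟪g t, z t - xs⟫ + η^2*‖g t‖^2 := by
      rw [norm_sub_sq_real, real_inner_smul_right, norm_smul, Real.norm_eq_abs,
        abs_of_pos hη0, real_inner_comm]
      ring
    have h3 : ‖z (t+1) - xs‖^2 ≤ ‖(z t - xs) - η • g t‖^2 :=
      pow_le_pow_left₀ (norm_nonneg _) h1 2
    have h4 : 2*η*⟪g t, z t - xs⟫ ≤ ‖z t - xs‖^2 - ‖z (t+1) - xs‖^2 + η^2*‖g t‖^2 := by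
      nlinarith
    have h5 : (‖z t - xs‖^2 - ‖z (t+1) - xs‖^2)/(2*η) + η/2 * ‖g t‖^2
        = (‖z t - xs‖^2 - ‖z (t+1) - xs‖^2 + η^2*‖g t‖^2)/(2*η) := by
      field_simp
    rw [h5, le_div_iff₀ (by positivity)]
    linarith
  set C : ℝ := η/2*(L*D)^2 + L*D*(κ*(η*L*D)/γ) with hC_def
  set c1 : ℝ := L*D*(κ*(2*D)) with hc1_def
  -- per-round regret bound
  have round : ∀ t ∈ Finset.Icc 1 T, f t (x t) - f t xs ≤
      (‖z t - xs‖^2 - ‖z (t+1) - xs‖^2)/(2*η) + (C + c1*(1-γ)^(t-1)) := by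
    intro t ht
    obtain ⟨ht1, ht2⟩ := Finset.mem_Icc.mp ht
    have hgi := grad_ineq (hconv t ht) (hdiff t ht) (x t) xs
    have hsplit : ⟪g t, x t - xs⟫ = ⟪g t, z t - xs⟫ + ⟪g t, x t - z t⟫ := by
      rw [← inner_add_right]
      congr 1
      abel
    have hcs : ⟪g t, x t - z t⟫ ≤ ‖g t‖ * ‖x t - z t‖ := real_inner_le_norm _ _
    have hmv := move t ht1 ht2
    have hgb := hgradbd t ht
    have hg0 : (0:ℝ) ≤ ‖g t‖ := norm_nonneg _
    have hmv0 : (0:ℝ) ≤ κ * (2*D) * (1-γ)^(t-1) + κ * (η*L*D) / γ := by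
      have : (0:ℝ) ≤ (1-γ)^(t-1) := by apply pow_nonneg; linarith
      positivity
    have h6 : ‖g t‖ * ‖x t - z t‖
        ≤ (L*D) * (κ*(2*D) * (1-γ)^(t-1) + κ*(η*L*D)/γ) :=
      mul_le_mul hgb hmv (norm_nonneg _) (by positivity)
    have h7 : (L*D) * (κ*(2*D) * (1-γ)^(t-1) + κ*(η*L*D)/γ)
        = c1*(1-γ)^(t-1) + L*D*(κ*(η*L*D)/γ) := by
      rw [hc1_def]
      ring
    have h8 : (0:ℝ) ≤ η/2 * ‖g t‖^2 := by positivity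
    have h9 : η/2 * ‖g t‖^2 ≤ η/2*(L*D)^2 := by
      have : ‖g t‖^2 ≤ (L*D)^2 := pow_le_pow_left₀ hg0 hgb 2
      nlinarith
    have h10 := ogd t ht
    rw [hC_def]
    nlinarith
  -- sum everything
  have hsum := Finset.sum_le_sum round
  rw [Finset.sum_add_distrib, Finset.sum_add_distrib, ← Finset.sum_div,
    sum_Icc_telescope (fun t => ‖z t - xs‖^2) T, Finset.sum_const, Nat.card_Icc,
    ← Finset.mul_sum] at hsum
  have htel : (‖z 1 - xs‖^2 - ‖z (T+1) - xs‖^2) ≤ 4*D^2 := by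
    have ha : ‖z 1 - xs‖ ≤ 2*D := by
      have := hzbd 1 (Finset.mem_Icc.mpr ⟨le_refl _, hT⟩)
      calc ‖z 1 - xs‖ ≤ ‖z 1‖ + ‖xs‖ := norm_sub_le _ _
        _ ≤ 2*D := by linarith
    have hb : ‖z 1 - xs‖^2 ≤ (2*D)^2 := pow_le_pow_left₀ (norm_nonneg _) ha 2
    nlinarith [sq_nonneg ‖z (T+1) - xs‖]
  have hc10 : 0 ≤ c1 := by rw [hc1_def]; positivity
  have hgeom := sum_geom_Icc_le hγ hγ1 T
  have hcard : ((T + 1 - 1 : ℕ) : ℝ) = (T:ℝ) := by norm_num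
  have hstep1 : ∑ t ∈ Finset.Icc 1 T, (f t (x t) - f t xs)
      ≤ 4*D^2/(2*η) + (T:ℝ)*C + c1*(1/γ) := by
    have e1 : (‖z 1 - xs‖^2 - ‖z (T+1) - xs‖^2)/(2*η) ≤ 4*D^2/(2*η) :=
      (div_le_div_iff_of_pos_right (by linarith : (0:ℝ) < 2*η)).mpr htel
    have e2 : c1 * (∑ t ∈ Finset.Icc 1 T, (1-γ)^(t-1)) ≤ c1 * (1/γ) :=
      mul_le_mul_of_nonneg_left hgeom hc10
    rw [nsmul_eq_mul, hcard] at hsum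
    linarith
  -- final numeric computation
  have hpoly : γ*(γ+2*κ) ≤ 1+4*κ^2 := by nlinarith
  have hTC : (T:ℝ)*C = T*L*D^2*(γ+2*κ)/s := by
    rw [hC_def, hη]
    field_simp
  have hA1 : 4*D^2/(2*η) = D^2*L*s/γ := by
    rw [hη]
    field_simp
    ring
  have hA4 : c1*(1/γ) = 2*L*D^2*κ/γ := by
    rw [hc1_def]
    ring
  have hmid : (T:ℝ)*L*D^2*(γ+2*κ)/s ≤ L*D^2*s/γ := by
    rw [div_le_div_iff₀ hs hγ]
    have h7 : (T:ℝ)*L*D^2*(γ*(γ+2*κ)) ≤ (T:ℝ)*L*D^2*(1+4*κ^2) :=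
      mul_le_mul_of_nonneg_left hpoly (by positivity)
    calc (T:ℝ)*L*D^2*(γ+2*κ)*γ = (T:ℝ)*L*D^2*(γ*(γ+2*κ)) := by ring
      _ ≤ (T:ℝ)*L*D^2*(1+4*κ^2) := h7
      _ = L*D^2*(s*s) := by rw [show s*s = s^2 by ring, hsq]; ring
      _ = L*D^2*s*s := by ring
  calc ∑ t ∈ Finset.Icc 1 T, (f t (x t) - f t xs)
      ≤ 4*D^2/(2*η) + (T:ℝ)*C + c1*(1/γ) := hstep1
    _ = D^2*L*s/γ + T*L*D^2*(γ+2*κ)/s + 2*L*D^2*κ/γ := by rw [hA1, hTC, hA4]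
    _ ≤ D^2*L*s/γ + L*D^2*s/γ + 2*L*D^2*κ/γ := by linarith
    _ = 2 * L * D ^ 2 / γ * (s + κ) := by ring
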